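/- arXiv:1306.1201 — 5 statements merged into one kernel-verified Lean document; each statement's English description precedes it below -/
import Mathlib

section
/- Let a ∈ (0,1] and n be a natural number. Then lim_{A → 0+} A^{(n+1)/a} · ∑_{p=1}^∞ p^n · exp(−A·p^a) = Γ((n+1)/a) / a. -/
open Filter Real Set MeasureTheory

namespace FaceSumAux

noncomputable def g (a : ℝ) (n : ℕ) : ℝ → ℝ := fun x => x ^ (n : ℝ) * Real.exp (-x ^ a)

noncomputable def m0 (a : ℝ) (n : ℕ) : ℝ := ((n : ℝ) / a) ^ (1 / a)

variable {a : ℝ} (n : ℕ)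

lemma g_nonneg {x : ℝ} (hx : 0 ≤ x) : 0 ≤ g a n x :=
  mul_nonneg (Real.rpow_nonneg hx _) (Real.exp_pos _).le

lemma m0_nonneg (ha : 0 < a) : 0 ≤ m0 a n := Real.rpow_nonneg (by positivity) _

lemma m0_rpow (ha : 0 < a) : m0 a n ^ a = (n : ℝ) / a := by
  rw [m0, ← Real.rpow_mul (by positivity), one_div_mul_cancel ha.ne', Real.rpow_one]

lemma hasDerivAt_g (ha : 0 < a) {x : ℝ} (hx : 0 < x) :
    HasDerivAt (g a n) (x ^ ((n : ℝ) - 1) * Real.exp (-x ^ a) * ((n : ℝ) - a * x ^ a)) x := by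
  have h1 : HasDerivAt (fun x : ℝ => x ^ (n : ℝ)) ((n : ℝ) * x ^ ((n : ℝ) - 1)) x :=
    Real.hasDerivAt_rpow_const (Or.inl hx.ne')
  have h2 : HasDerivAt (fun x : ℝ => x ^ a) (a * x ^ (a - 1)) x :=
    Real.hasDerivAt_rpow_const (Or.inl hx.ne')
  have h3 := (h2.neg).exp
  have h4 : HasDerivAt (fun x : ℝ => x ^ (n : ℝ) * Real.exp (-x ^ a))
      ((n : ℝ) * x ^ ((n : ℝ) - 1) * Real.exp (-x ^ a) + x ^ (n : ℝ) * (Real.exp (-x ^ a) * -(a * x ^ (a - 1)))) x := h1.mul h3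
  show HasDerivAt (fun x : ℝ => x ^ (n : ℝ) * Real.exp (-x ^ a)) _ x
  convert h4 using 1
  have e : x ^ (n : ℝ) * x ^ (a - 1) = x ^ ((n : ℝ) - 1) * x ^ a := by
    rw [← Real.rpow_add hx, ← Real.rpow_add hx]; ring_nf
  linear_combination (a * Real.exp (-x ^ a)) * e

lemma continuousOn_g (ha : 0 < a) : ContinuousOn (g a n) (Ici 0) := by
  have c1 : ContinuousOn (fun x : ℝ => x ^ (n : ℝ)) (Ici 0) := fun x _ =>
    (Real.continuousAt_rpow_const x _ (Or.inr (Nat.cast_nonneg n))).continuousWithinAt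
  have c2 : ContinuousOn (fun x : ℝ => x ^ a) (Ici 0) := fun x _ =>
    (Real.continuousAt_rpow_const x _ (Or.inr ha.le)).continuousWithinAt
  exact c1.mul (Real.continuous_exp.comp_continuousOn c2.neg)

lemma monotoneOn_g (ha : 0 < a) : MonotoneOn (g a n) (Icc 0 (m0 a n)) := by
  apply monotoneOn_of_deriv_nonneg (convex_Icc _ _)
    ((continuousOn_g n ha).mono Icc_subset_Ici_self)
  · rw [interior_Icc]
    exact fun x hx => ((hasDerivAt_g n ha hx.1).differentiableAt).differentiableWithinAt
  · rw [interior_Icc]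
    intro x hx
    rw [(hasDerivAt_g n ha hx.1).deriv]
    have hxa : x ^ a ≤ (n : ℝ) / a := by
      rw [← m0_rpow n ha]
      exact Real.rpow_le_rpow hx.1.le hx.2.le ha.le
    have h5 : 0 ≤ (n : ℝ) - a * x ^ a := by
      have := (mul_le_mul_of_nonneg_left hxa ha.le)
      rw [mul_div_cancel₀ _ ha.ne'] at this
      linarith
    exact mul_nonneg (mul_nonneg (Real.rpow_nonneg hx.1.le _) (Real.exp_pos _).le) h5

lemma antitoneOn_g (ha : 0 < a) : AntitoneOn (g a n) (Ici (m0 a n)) := by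
  apply antitoneOn_of_deriv_nonpos (convex_Ici _)
    ((continuousOn_g n ha).mono (Ici_subset_Ici.mpr (m0_nonneg n ha)))
  · rw [interior_Ici]
    exact fun x hx => ((hasDerivAt_g n ha ((m0_nonneg n ha).trans_lt hx)).differentiableAt).differentiableWithinAt
  · rw [interior_Ici]
    intro x hx
    have hx0 : 0 < x := (m0_nonneg n ha).trans_lt hx
    rw [(hasDerivAt_g n ha hx0).deriv]
    have hxa : (n : ℝ) / a ≤ x ^ a := by
      rw [← m0_rpow n ha]
      exact Real.rpow_le_rpow (m0_nonneg n ha) hx.le ha.le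
    have h5 : (n : ℝ) - a * x ^ a ≤ 0 := by
      have := mul_le_mul_of_nonneg_left hxa ha.le
      rw [mul_div_cancel₀ _ ha.ne'] at this
      linarith
    exact mul_nonpos_of_nonneg_of_nonpos
      (mul_nonneg (Real.rpow_nonneg hx0.le _) (Real.exp_pos _).le) h5

lemma g_le_max (ha : 0 < a) {x : ℝ} (hx : 0 ≤ x) : g a n x ≤ g a n (m0 a n) := by
  rcases le_total x (m0 a n) with h | h
  · exact monotoneOn_g n ha ⟨hx, h⟩ ⟨m0_nonneg n ha, le_rfl⟩ h
  · exact antitoneOn_g n ha self_mem_Ici h h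

lemma integrableOn_g (ha : 0 < a) : IntegrableOn (g a n) (Ioi 0) := by
  have h0 : IntegrableOn (fun u : ℝ => Real.exp (-u) * u ^ (((n : ℝ) + 1) / a - 1)) (Ioi 0) :=
    Real.GammaIntegral_convergent (by positivity)
  have h1 := (integrableOn_Ioi_comp_rpow_iff'
    (fun u : ℝ => Real.exp (-u) * u ^ (((n : ℝ) + 1) / a - 1)) ha.ne').mpr h0
  refine (h1.congr_fun (fun x hx => ?_) measurableSet_Ioi)
  have hx : (0:ℝ) < x := hx
  have e1 : (x ^ a) ^ (((n : ℝ) + 1) / a - 1) = x ^ (a * (((n : ℝ) + 1) / a - 1)) :=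
    (Real.rpow_mul hx.le _ _).symm
  have e2 : a - 1 + a * (((n : ℝ) + 1) / a - 1) = (n : ℝ) := by field_simp; ring
  beta_reduce
  rw [smul_eq_mul, e1, g]
  rw [← mul_assoc, mul_comm (x ^ (a-1)) (Real.exp (-x ^ a)), mul_assoc,
    ← Real.rpow_add hx, e2, mul_comm]

lemma integral_g (ha : 0 < a) :
    ∫ x in Ioi (0:ℝ), g a n x = Real.Gamma (((n : ℝ) + 1) / a) / a := by
  rw [show (∫ x in Ioi (0:ℝ), g a n x) = ∫ x in Ioi (0:ℝ), x ^ (n:ℝ) * Real.exp (-x ^ a) from rfl,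
    integral_rpow_mul_exp_neg_rpow ha (by linarith [Nat.cast_nonneg (α := ℝ) n] : (-1:ℝ) < (n:ℝ))]
  rw [one_div, inv_mul_eq_div]

lemma sandwich (ha : 0 < a) {ε : ℝ} (hε : 0 < ε) :
    Summable (fun i : ℕ => g a n (ε * ((i : ℝ) + 1))) ∧
    (∑' i : ℕ, g a n (ε * ((i : ℝ) + 1))) ≤
      (∫ x in Ioi (0:ℝ), g a n (ε * x)) + 2 * g a n (m0 a n) ∧
    (∫ x in Ioi (0:ℝ), g a n (ε * x)) ≤
      (∑' i : ℕ, g a n (ε * ((i : ℝ) + 1))) + g a n (m0 a n) := by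
  set M := g a n (m0 a n) with hMdef
  let F : ℝ → ℝ := fun x => g a n (ε * x)
  let f : ℕ → ℝ := fun i => F ((i : ℝ) + 1)
  show Summable f ∧ (∑' i, f i) ≤ (∫ x in Ioi (0:ℝ), F x) + 2 * M ∧
    (∫ x in Ioi (0:ℝ), F x) ≤ (∑' i, f i) + M
  set J := ∫ x in Ioi (0:ℝ), F x with hJdef
  have Fnonneg : ∀ x : ℝ, 0 ≤ x → 0 ≤ F x := fun x hx => g_nonneg n (by positivity)
  have fnonneg : ∀ i : ℕ, 0 ≤ f i := fun i => Fnonneg _ (by positivity)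
  have FleM : ∀ x : ℝ, 0 ≤ x → F x ≤ M := fun x hx => g_le_max n ha (by positivity)
  have hFint : IntegrableOn F (Ioi 0) := by
    have := (integrableOn_Ioi_comp_mul_left_iff (g a n) 0 hε).mpr
    rw [mul_zero] at this
    exact this (integrableOn_g n ha)
  set m : ℝ := m0 a n / ε with hmdef
  have hm0 : 0 ≤ m := div_nonneg (m0_nonneg n ha) hε.le
  set N : ℕ := ⌊m⌋₊ with hNdef
  have hNm : (N : ℝ) ≤ m := Nat.floor_le hm0
  have hmN1 : m < (N : ℝ) + 1 := Nat.lt_floor_add_one m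
  have hεm : ε * m = m0 a n := by
    rw [hmdef, mul_comm, div_mul_cancel₀ _ hε.ne']
  have Fmono : MonotoneOn F (Icc 0 (N : ℝ)) := by
    intro x hx y hy hxy
    refine monotoneOn_g n ha ⟨mul_nonneg hε.le hx.1, ?_⟩ ⟨mul_nonneg hε.le hy.1, ?_⟩
      (mul_le_mul_of_nonneg_left hxy hε.le)
    · rw [← hεm]; exact mul_le_mul_of_nonneg_left (hx.2.trans hNm) hε.le
    · rw [← hεm]; exact mul_le_mul_of_nonneg_left (hy.2.trans hNm) hε.le
  have Fanti : AntitoneOn F (Ici ((N : ℝ) + 1)) := by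
    intro x hx y hy hxy
    refine antitoneOn_g n ha ?_ ?_ (mul_le_mul_of_nonneg_left hxy hε.le)
    · rw [Set.mem_Ici, ← hεm]
      exact mul_le_mul_of_nonneg_left (hmN1.le.trans hx) hε.le
    · rw [Set.mem_Ici, ← hεm]
      exact mul_le_mul_of_nonneg_left (hmN1.le.trans hy) hε.le
  -- Key A : monotone piece upper bound
  have hA : ∑ i ∈ Finset.range N, f i ≤ (∫ x in (0:ℝ)..(N:ℝ), F x) + M := by
    have h1 : ∑ i ∈ Finset.range N, F ((0:ℝ) + i) ≤ ∫ x in (0:ℝ)..((0:ℝ) + N), F x :=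
      MonotoneOn.sum_le_integral (by simpa using Fmono)
    have h1' : ∑ i ∈ Finset.range N, F (i : ℝ) ≤ ∫ x in (0:ℝ)..(N:ℝ), F x := by
      simpa using h1
    have hsplit : ∑ i ∈ Finset.range (N+1), F (i : ℝ) = ∑ i ∈ Finset.range N, f i + F 0 := by
      rw [Finset.sum_range_succ' (fun i : ℕ => F (i : ℝ)) N]
      simp only [f, Nat.cast_add, Nat.cast_one, Nat.cast_zero]
    have hsplit2 : ∑ i ∈ Finset.range (N+1), F (i : ℝ) = ∑ i ∈ Finset.range N, F (i : ℝ) + F (N : ℝ) :=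
      Finset.sum_range_succ _ N
    have hFN : F (N : ℝ) ≤ M := FleM _ (Nat.cast_nonneg N)
    have hF0 : 0 ≤ F 0 := Fnonneg 0 le_rfl
    linarith
  -- Key B : antitone piece upper bound
  have hB : ∀ j : ℕ, ∑ i ∈ Finset.range j, F (((N:ℝ)+1) + ((i:ℝ)+1)) ≤
      ∫ x in ((N:ℝ)+1)..(((N:ℝ)+1) + j), F x := by
    intro j
    have h1 := AntitoneOn.sum_le_integral
      (x₀ := (N:ℝ)+1) (a := j) (f := F) (Fanti.mono Icc_subset_Ici_self)
    convert h1 using 2 with i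
    push_cast
    ring
  -- Key C : antitone piece lower bound
  have hC : ∀ j : ℕ, (∫ x in ((N:ℝ)+1)..(((N:ℝ)+1) + j), F x) ≤
      ∑ i ∈ Finset.range j, F (((N:ℝ)+1) + (i:ℝ)) :=
    fun j => AntitoneOn.integral_le_sum (Fanti.mono Icc_subset_Ici_self)
  -- Key D : monotone piece lower bound
  have hD : (∫ x in (0:ℝ)..(N:ℝ), F x) ≤ ∑ i ∈ Finset.range N, f i := by
    have h1 := MonotoneOn.integral_le_sum (x₀ := 0) (a := N) (f := F) (by simpa using Fmono)
    rw [zero_add] at h1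
    refine le_trans h1 (le_of_eq ?_)
    refine Finset.sum_congr rfl fun i _ => ?_
    show F _ = F _
    congr 1
    push_cast
    ring
  -- integral pieces fit under J
  have hJpieces : ∀ k : ℕ,
      (∫ x in Ioc (0:ℝ) (N:ℝ), F x) + (∫ x in Ioc ((N:ℝ)+1) (((N:ℝ)+1)+k), F x) ≤ J := by
    intro k
    have hsub1 : Ioc (0:ℝ) (N:ℝ) ⊆ Ioi 0 := Ioc_subset_Ioi_self
    have hsub2 : Ioc ((N:ℝ)+1) (((N:ℝ)+1)+k) ⊆ Ioi 0 := fun x hx => by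
      have h := hx.1
      have hN0 : (0:ℝ) ≤ (N:ℝ) := Nat.cast_nonneg N
      show (0:ℝ) < x
      linarith
    have hdisj : Disjoint (Ioc (0:ℝ) (N:ℝ)) (Ioc ((N:ℝ)+1) (((N:ℝ)+1)+k)) := by
      refine Set.disjoint_left.mpr ?_
      rintro x ⟨_, h2⟩ ⟨h3, _⟩
      linarith
    rw [← setIntegral_union hdisj measurableSet_Ioc (hFint.mono_set hsub1)
      (hFint.mono_set hsub2)]
    refine setIntegral_mono_set hFint ?_ (HasSubset.Subset.eventuallyLE (union_subset hsub1 hsub2))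
    exact (ae_restrict_iff' measurableSet_Ioi).mpr (ae_of_all _ fun x hx => Fnonneg x (le_of_lt hx))
  have hM0 : 0 ≤ M := by
    rw [hMdef]; exact g_nonneg n (m0_nonneg n ha)
  -- uniform partial sum bound
  have key : ∀ k : ℕ, ∑ i ∈ Finset.range k, f i ≤ J + 2 * M := by
    intro k
    have step1 : ∑ i ∈ Finset.range k, f i ≤ ∑ i ∈ Finset.range (N+1+k), f i :=
      Finset.sum_le_sum_of_subset_of_nonneg
        (Finset.range_subset_range.mpr (by omega)) (fun i _ _ => fnonneg i)
    have step2 : ∑ i ∈ Finset.range (N+1+k), f i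
        = ∑ i ∈ Finset.range (N+1), f i + ∑ i ∈ Finset.range k, f (N+1+i) :=
      Finset.sum_range_add f (N+1) k
    have step3 : ∑ i ∈ Finset.range (N+1), f i = ∑ i ∈ Finset.range N, f i + f N :=
      Finset.sum_range_succ f N
    have step4 : ∑ i ∈ Finset.range k, f (N+1+i) = ∑ i ∈ Finset.range k, F (((N:ℝ)+1) + ((i:ℝ)+1)) := by
      refine Finset.sum_congr rfl fun i _ => ?_
      show F _ = F _
      congr 1
      push_cast
      ring
    have step5 : f N ≤ M := FleM _ (by positivity)
    have step6 := hB k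
    have step7 := hJpieces k
    have e1 : (∫ x in (0:ℝ)..(N:ℝ), F x) = ∫ x in Ioc (0:ℝ) (N:ℝ), F x :=
      intervalIntegral.integral_of_le (Nat.cast_nonneg N)
    have e2 : (∫ x in ((N:ℝ)+1)..(((N:ℝ)+1)+k), F x)
        = ∫ x in Ioc ((N:ℝ)+1) (((N:ℝ)+1)+k), F x :=
      intervalIntegral.integral_of_le (by linarith [Nat.cast_nonneg (α := ℝ) k])
    rw [e1] at hA
    rw [e2] at step6
    calc ∑ i ∈ Finset.range k, f i ≤ ∑ i ∈ Finset.range (N+1+k), f i := step1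
      _ = ∑ i ∈ Finset.range N, f i + f N + ∑ i ∈ Finset.range k, F (((N:ℝ)+1) + ((i:ℝ)+1)) := by
          rw [step2, step3, step4]
      _ ≤ ((∫ x in Ioc (0:ℝ) (N:ℝ), F x) + M) + M
            + (∫ x in Ioc ((N:ℝ)+1) (((N:ℝ)+1)+k), F x) := by
          exact add_le_add (add_le_add hA step5) step6
      _ ≤ J + 2 * M := by linarith
  have hsum : Summable f := summable_of_sum_range_le fnonneg key
  refine ⟨hsum, Summable.tsum_le_of_sum_range_le hsum key, ?_⟩
  -- lower bound
  have hTail : Summable (fun i : ℕ => f (i + N)) := (summable_nat_add_iff N).mpr hsum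
  have htsplit : ∑ i ∈ Finset.range N, f i + ∑' i, f (i + N) = ∑' i, f i :=
    Summable.sum_add_tsum_nat_add N hsum
  -- J = ∫ Ioc 0 (N+1) + ∫ Ioi (N+1)
  have hd2 : Disjoint (Ioc (0:ℝ) ((N:ℝ)+1)) (Ioi ((N:ℝ)+1)) := by
    refine Set.disjoint_left.mpr ?_
    rintro x ⟨_, h2⟩ h3
    exact absurd h3 (by simpa using h2)
  have hu2 : Ioc (0:ℝ) ((N:ℝ)+1) ∪ Ioi ((N:ℝ)+1) = Ioi 0 :=
    Set.Ioc_union_Ioi_eq_Ioi (by positivity)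
  have hJsplit : J = (∫ x in Ioc (0:ℝ) ((N:ℝ)+1), F x) + ∫ x in Ioi ((N:ℝ)+1), F x := by
    rw [hJdef, ← hu2, setIntegral_union hd2 measurableSet_Ioi
      (hFint.mono_set (hu2 ▸ subset_union_left))
      (hFint.mono_set (hu2 ▸ subset_union_right))]
  have hIoc1 : (∫ x in Ioc (0:ℝ) ((N:ℝ)+1), F x) ≤ ∑ i ∈ Finset.range N, f i + M := by
    have hii1 : IntervalIntegrable F volume 0 (N:ℝ) :=
      (intervalIntegrable_iff_integrableOn_Ioc_of_le (Nat.cast_nonneg N)).mpr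
        (hFint.mono_set Ioc_subset_Ioi_self)
    have hii2 : IntervalIntegrable F volume (N:ℝ) ((N:ℝ)+1) :=
      (intervalIntegrable_iff_integrableOn_Ioc_of_le (by linarith)).mpr
        (hFint.mono_set (fun x hx => lt_of_le_of_lt (Nat.cast_nonneg N) hx.1))
    have hadj : (∫ x in (0:ℝ)..(N:ℝ), F x) + (∫ x in (N:ℝ)..((N:ℝ)+1), F x)
        = ∫ x in (0:ℝ)..((N:ℝ)+1), F x :=
      intervalIntegral.integral_add_adjacent_intervals hii1 hii2
    have hmid : (∫ x in (N:ℝ)..((N:ℝ)+1), F x) ≤ M := by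
      have hle : (∫ x in (N:ℝ)..((N:ℝ)+1), F x) ≤ ∫ _x in (N:ℝ)..((N:ℝ)+1), M := by
        refine intervalIntegral.integral_mono_on (by linarith) hii2
          intervalIntegrable_const (fun x hx => FleM x ?_)
        exact le_trans (Nat.cast_nonneg N) hx.1
      simpa using hle
    have : (∫ x in Ioc (0:ℝ) ((N:ℝ)+1), F x) = ∫ x in (0:ℝ)..((N:ℝ)+1), F x :=
      (intervalIntegral.integral_of_le (by positivity)).symm
    rw [this, ← hadj]
    exact add_le_add hD hmid
  have hIoi1 : (∫ x in Ioi ((N:ℝ)+1), F x) ≤ ∑' i, f (i + N) := by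
    have hint : IntegrableOn F (Ioi ((N:ℝ)+1)) :=
      hFint.mono_set (Ioi_subset_Ioi (by positivity))
    have htb : Tendsto (fun j : ℕ => ((N:ℝ)+1) + j) atTop atTop :=
      tendsto_atTop_add_const_left _ _ tendsto_natCast_atTop_atTop
    have hten := intervalIntegral_tendsto_integral_Ioi ((N:ℝ)+1) hint htb
    refine le_of_tendsto hten (Eventually.of_forall fun j => ?_)
    refine le_trans (hC j) ?_
    have : ∑ i ∈ Finset.range j, F (((N:ℝ)+1) + (i:ℝ)) = ∑ i ∈ Finset.range j, f (i + N) := by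
      refine Finset.sum_congr rfl fun i _ => ?_
      show F _ = F _
      congr 1
      push_cast
      ring
    rw [this]
    exact Summable.sum_le_tsum (Finset.range j) (fun i _ => fnonneg _) hTail
  calc J = (∫ x in Ioc (0:ℝ) ((N:ℝ)+1), F x) + ∫ x in Ioi ((N:ℝ)+1), F x := hJsplit
    _ ≤ (∑ i ∈ Finset.range N, f i + M) + ∑' i, f (i + N) := add_le_add hIoc1 hIoi1
    _ = (∑' i, f i) + M := by rw [← htsplit]; ring

lemma integral_scaled (ha : 0 < a) {ε : ℝ} (hε : 0 < ε) :
    (∫ x in Ioi (0:ℝ), g a n (ε * x)) = ε⁻¹ * (Real.Gamma (((n : ℝ) + 1) / a) / a) := by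
  have h := integral_comp_mul_left_Ioi (g a n) 0 hε
  rw [mul_zero] at h
  rw [h, integral_g n ha, smul_eq_mul]

lemma tendsto_eps (ha : 0 < a) :
    Tendsto (fun ε : ℝ => ε * ∑' i : ℕ, g a n (ε * ((i : ℝ) + 1)))
      (nhdsWithin 0 (Ioi 0)) (nhds (Real.Gamma (((n : ℝ) + 1) / a) / a)) := by
  set C := Real.Gamma (((n : ℝ) + 1) / a) / a with hC
  set M := g a n (m0 a n) with hM
  have hM0 : 0 ≤ M := g_nonneg n (m0_nonneg n ha)
  have hlow : Tendsto (fun ε : ℝ => C - M * ε) (nhdsWithin 0 (Ioi 0)) (nhds C) := by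
    have h : Tendsto (fun ε : ℝ => C - M * ε) (nhds 0) (nhds (C - M * 0)) :=
      tendsto_const_nhds.sub (tendsto_const_nhds.mul tendsto_id)
    rw [mul_zero, sub_zero] at h
    exact h.mono_left nhdsWithin_le_nhds
  have hhigh : Tendsto (fun ε : ℝ => C + 2 * M * ε) (nhdsWithin 0 (Ioi 0)) (nhds C) := by
    have h : Tendsto (fun ε : ℝ => C + 2 * M * ε) (nhds 0) (nhds (C + 2 * M * 0)) :=
      tendsto_const_nhds.add (tendsto_const_nhds.mul tendsto_id)
    rw [mul_zero, add_zero] at h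
    exact h.mono_left nhdsWithin_le_nhds
  refine tendsto_of_tendsto_of_tendsto_of_le_of_le' hlow hhigh ?_ ?_
  · filter_upwards [self_mem_nhdsWithin] with ε hε
    replace hε : 0 < ε := hε
    obtain ⟨hs, hup, hlo⟩ := sandwich n ha hε
    rw [integral_scaled n ha hε, ← hC] at hlo
    set T := ∑' i : ℕ, g a n (ε * ((i : ℝ) + 1)) with hT
    have h2 := mul_le_mul_of_nonneg_left hlo hε.le
    have h3 : ε * (ε⁻¹ * C) = C := by field_simp
    nlinarith
  · filter_upwards [self_mem_nhdsWithin] with ε hε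
    replace hε : 0 < ε := hε
    obtain ⟨hs, hup, hlo⟩ := sandwich n ha hε
    rw [integral_scaled n ha hε, ← hC] at hup
    set T := ∑' i : ℕ, g a n (ε * ((i : ℝ) + 1)) with hT
    have h2 := mul_le_mul_of_nonneg_left hup hε.le
    have h3 : ε * (ε⁻¹ * C + 2 * M) = C + 2 * M * ε := by field_simp
    nlinarith

end FaceSumAux

open FaceSumAux

theorem face_sum_asymptotics (a : ℝ) (ha : a ∈ Set.Ioc (0:ℝ) 1) (n : ℕ) :
    Tendsto
      (fun A : ℝ =>
        A ^ (((n : ℝ) + 1) / a) * ∑' p : ℕ+, (p : ℝ) ^ n * Real.exp (-A * (p : ℝ) ^ a))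
      (nhdsWithin 0 (Set.Ioi 0))
      (nhds (Real.Gamma (((n : ℝ) + 1) / a) / a)) := by
  obtain ⟨ha0, _ha1⟩ := ha
  have hane : (1:ℝ)/a ≠ 0 := one_div_ne_zero ha0.ne'
  have hφ : Tendsto (fun A : ℝ => A ^ ((1:ℝ)/a)) (nhdsWithin 0 (Set.Ioi 0))
      (nhdsWithin 0 (Set.Ioi 0)) := by
    rw [tendsto_nhdsWithin_iff]
    constructor
    · have hc : ContinuousAt (fun A : ℝ => A ^ ((1:ℝ)/a)) 0 :=
        Real.continuousAt_rpow_const 0 _ (Or.inr (by positivity))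
      have h := hc.tendsto
      rw [Real.zero_rpow hane] at h
      exact h.mono_left nhdsWithin_le_nhds
    · filter_upwards [self_mem_nhdsWithin] with A hA
      exact Real.rpow_pos_of_pos hA _
  have h2 := (tendsto_eps n ha0).comp hφ
  refine h2.congr' ?_
  filter_upwards [self_mem_nhdsWithin] with A hA
  replace hA : 0 < A := hA
  set ε := A ^ ((1:ℝ)/a) with hεdef
  have hε : 0 < ε := Real.rpow_pos_of_pos hA _
  have eA : ε ^ a = A := by
    rw [hεdef, ← Real.rpow_mul hA.le, one_div_mul_cancel ha0.ne', Real.rpow_one]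
  have eq1 : A ^ (((n:ℝ)+1)/a) = ε ^ (n+1) := by
    rw [show ((n:ℝ)+1)/a = (1/a) * ((n:ℝ)+1) by ring, Real.rpow_mul hA.le,
      show ((n:ℝ)+1) = ((n+1:ℕ):ℝ) by push_cast; ring, Real.rpow_natCast]
  show ε * ∑' i : ℕ, g a n (ε * ((i : ℝ) + 1)) = _
  have e0 : (∑' p : ℕ+, (p : ℝ) ^ n * Real.exp (-A * (p : ℝ) ^ a)) =
      ∑' i : ℕ, (((i:ℝ)+1) ^ n * Real.exp (-A * ((i:ℝ)+1) ^ a)) := by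
    rw [← Equiv.pnatEquivNat.symm.tsum_eq
      (fun p : ℕ+ => (p : ℝ) ^ n * Real.exp (-A * (p : ℝ) ^ a))]
    refine tsum_congr fun i => ?_
    have : ((Equiv.pnatEquivNat.symm i : ℕ+) : ℝ) = (i : ℝ) + 1 := by
      simp [Equiv.pnatEquivNat, Nat.succPNat]
    rw [this]
  rw [e0, ← tsum_mul_left, ← tsum_mul_left]
  refine tsum_congr fun i => ?_
  have hi : (0:ℝ) ≤ (i:ℝ)+1 := by positivity
  have eq2 : (ε*((i:ℝ)+1)) ^ (n:ℝ) = ε ^ n * ((i:ℝ)+1) ^ n := by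
    rw [Real.rpow_natCast, mul_pow]
  have eq3 : (ε*((i:ℝ)+1)) ^ a = A * ((i:ℝ)+1) ^ a := by
    rw [Real.mul_rpow hε.le hi, eA]
  show ε * (g a n (ε * ((i:ℝ)+1))) = A ^ (((n:ℝ)+1)/a) * (((i:ℝ)+1) ^ n * Real.exp (-A * ((i:ℝ)+1) ^ a))
  simp only [g]
  rw [eq2, eq3, eq1, neg_mul]
  ring
end

section
/- Let a ∈ (0,1]. Then lim_{A → 0+} A^{1/a} · ∑_{p ∈ ℤ} exp(−A·|p|^a) = 2·Γ(1/a) / a. -/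
open Filter Real MeasureTheory Set

section helpers

variable {a : ℝ}

private lemma f_cont (ha0 : 0 < a) : Continuous (fun x : ℝ => Real.exp (-x ^ a)) := by
  have h : Continuous (fun x : ℝ => x ^ a) := by
    rw [continuous_iff_continuousAt]
    intro x
    exact Real.continuousAt_rpow_const x a (Or.inr ha0.le)
  exact Real.continuous_exp.comp h.neg

private lemma f_anti (ha0 : 0 < a) {x y : ℝ} (hx : 0 ≤ x) (hxy : x ≤ y) :
    Real.exp (-y ^ a) ≤ Real.exp (-x ^ a) := by
  apply Real.exp_le_exp.mpr
  exact neg_le_neg (Real.rpow_le_rpow hx hxy ha0.le)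

private lemma f_integrable (ha0 : 0 < a) :
    IntegrableOn (fun x : ℝ => Real.exp (-x ^ a)) (Ioi 0) := by
  rw [← integrableOn_Ioi_comp_rpow_iff' (fun x : ℝ => Real.exp (-x ^ a))
    (p := 1/a) (one_div_ne_zero ha0.ne')]
  have hcongr : ∀ x ∈ Ioi (0:ℝ),
      x ^ (1/a - 1) • Real.exp (-(x ^ (1/a)) ^ a) = Real.exp (-x) * x ^ (1/a - 1) := by
    intro x hx
    rw [← Real.rpow_mul (le_of_lt hx), one_div_mul_cancel ha0.ne', Real.rpow_one,
      smul_eq_mul, mul_comm]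
  exact (integrableOn_congr_fun hcongr measurableSet_Ioi).mpr
    (Real.GammaIntegral_convergent (by positivity))

private lemma key_bounds (ha0 : 0 < a) {t : ℝ} (ht : 0 < t) :
    Summable (fun n : ℕ => Real.exp (-(t * ((n:ℝ)+1)) ^ a)) ∧
    t * ∑' n : ℕ, Real.exp (-(t * ((n:ℝ)+1)) ^ a) ≤ (∫ x in Ioi (0:ℝ), Real.exp (-x ^ a)) ∧
    (∫ x in Ioi (0:ℝ), Real.exp (-x ^ a)) ≤ t + t * ∑' n : ℕ, Real.exp (-(t * ((n:ℝ)+1)) ^ a) := by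
  set I : ℝ := ∫ x in Ioi (0:ℝ), Real.exp (-x ^ a) with hI
  have hcont := f_cont ha0
  have hlb : ∀ n : ℕ, t * Real.exp (-(t * ((n:ℝ)+1)) ^ a)
      ≤ ∫ x in (t*(n:ℝ))..(t*((n:ℝ)+1)), Real.exp (-x ^ a) := by
    intro n
    have hle : t*(n:ℝ) ≤ t*((n:ℝ)+1) := by nlinarith [ht.le, Nat.cast_nonneg (α := ℝ) n]
    have := intervalIntegral.integral_mono_on (μ := volume) hle
      (intervalIntegrable_const (c := Real.exp (-(t * ((n:ℝ)+1)) ^ a)))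
      (hcont.intervalIntegrable _ _)
      (fun x hx => f_anti ha0 (le_trans (by positivity) hx.1) hx.2)
    rw [intervalIntegral.integral_const, smul_eq_mul,
      show t*((n:ℝ)+1) - t*(n:ℝ) = t by ring] at this
    exact this
  have hub : ∀ n : ℕ, (∫ x in (t*(n:ℝ))..(t*((n:ℝ)+1)), Real.exp (-x ^ a))
      ≤ t * Real.exp (-(t * (n:ℝ)) ^ a) := by
    intro n
    have hle : t*(n:ℝ) ≤ t*((n:ℝ)+1) := by nlinarith [ht.le, Nat.cast_nonneg (α := ℝ) n]
    have := intervalIntegral.integral_mono_on (μ := volume) hle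
      (hcont.intervalIntegrable _ _)
      (intervalIntegrable_const (c := Real.exp (-(t * (n:ℝ)) ^ a)))
      (fun x hx => f_anti ha0 (by positivity) hx.1)
    rw [intervalIntegral.integral_const, smul_eq_mul,
      show t*((n:ℝ)+1) - t*(n:ℝ) = t by ring] at this
    exact this
  have htel : ∀ N : ℕ, ∑ n ∈ Finset.range N, ∫ x in (t*(n:ℝ))..(t*((n:ℝ)+1)), Real.exp (-x ^ a)
      = ∫ x in (0:ℝ)..(t*(N:ℝ)), Real.exp (-x ^ a) := by
    intro N
    have h2 := intervalIntegral.sum_integral_adjacent_intervals (μ := volume)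
      (a := fun k : ℕ => t * (k:ℝ)) (f := fun x => Real.exp (-x ^ a)) (n := N)
      (fun k _ => hcont.intervalIntegrable _ _)
    simp only [Nat.cast_zero, mul_zero] at h2
    rw [← h2]
    refine Finset.sum_congr rfl fun n _ => ?_
    norm_num [Nat.cast_add]
  have hIoc : ∀ N : ℕ, (∫ x in (0:ℝ)..(t*(N:ℝ)), Real.exp (-x ^ a)) ≤ I := by
    intro N
    rw [intervalIntegral.integral_of_le (by positivity)]
    refine setIntegral_mono_set (f_integrable ha0) ?_ ?_
    · exact Eventually.of_forall fun x => (Real.exp_pos _).le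
    · exact HasSubset.Subset.eventuallyLE Ioc_subset_Ioi_self
  have hpartial : ∀ N : ℕ,
      ∑ n ∈ Finset.range N, t * Real.exp (-(t * ((n:ℝ)+1)) ^ a) ≤ I := by
    intro N
    calc ∑ n ∈ Finset.range N, t * Real.exp (-(t * ((n:ℝ)+1)) ^ a)
        ≤ ∑ n ∈ Finset.range N, ∫ x in (t*(n:ℝ))..(t*((n:ℝ)+1)), Real.exp (-x ^ a) :=
          Finset.sum_le_sum fun n _ => hlb n
      _ = ∫ x in (0:ℝ)..(t*(N:ℝ)), Real.exp (-x ^ a) := htel N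
      _ ≤ I := hIoc N
  have hsum : Summable (fun n : ℕ => Real.exp (-(t * ((n:ℝ)+1)) ^ a)) := by
    refine summable_of_sum_range_le (c := I / t) (fun n => (Real.exp_pos _).le) fun N => ?_
    rw [le_div_iff₀ ht]
    calc (∑ n ∈ Finset.range N, Real.exp (-(t * ((n:ℝ)+1)) ^ a)) * t
        = ∑ n ∈ Finset.range N, t * Real.exp (-(t * ((n:ℝ)+1)) ^ a) := by
          rw [Finset.sum_mul]
          exact Finset.sum_congr rfl fun n _ => mul_comm _ _
      _ ≤ I := hpartial N
  refine ⟨hsum, ?_, ?_⟩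
  · rw [← tsum_mul_left]
    exact Summable.tsum_le_of_sum_range_le (hsum.mul_left t) hpartial
  · -- full series over n from 0
    have hfull : Summable (fun n : ℕ => Real.exp (-(t * (n:ℝ)) ^ a)) := by
      rw [← summable_nat_add_iff 1]
      convert hsum using 2 with n
      push_cast
      rfl
      push_cast
      ring_nf
    have hfullt : Summable (fun n : ℕ => t * Real.exp (-(t * (n:ℝ)) ^ a)) := hfull.mul_left t
    have hle : I ≤ ∑' n : ℕ, t * Real.exp (-(t * (n:ℝ)) ^ a) := by
      have htend : Tendsto (fun N : ℕ => ∫ x in (0:ℝ)..(t*(N:ℝ)), Real.exp (-x ^ a)) atTop (nhds I) :=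
        intervalIntegral_tendsto_integral_Ioi 0 (f_integrable ha0)
          (tendsto_natCast_atTop_atTop.const_mul_atTop ht)
      refine le_of_tendsto htend (Eventually.of_forall fun N => ?_)
      calc (∫ x in (0:ℝ)..(t*(N:ℝ)), Real.exp (-x ^ a))
          = ∑ n ∈ Finset.range N, ∫ x in (t*(n:ℝ))..(t*((n:ℝ)+1)), Real.exp (-x ^ a) := (htel N).symm
        _ ≤ ∑ n ∈ Finset.range N, t * Real.exp (-(t * (n:ℝ)) ^ a) :=
            Finset.sum_le_sum fun n _ => hub n
        _ ≤ ∑' n : ℕ, t * Real.exp (-(t * (n:ℝ)) ^ a) :=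
            Summable.sum_le_tsum _ (fun n _ => by positivity) hfullt
    have hsplit : ∑' n : ℕ, t * Real.exp (-(t * (n:ℝ)) ^ a)
        = t + t * ∑' n : ℕ, Real.exp (-(t * ((n:ℝ)+1)) ^ a) := by
      rw [Summable.tsum_eq_zero_add hfullt]
      congr 1
      · simp [Real.zero_rpow ha0.ne']
      · rw [← tsum_mul_left]
        congr 1 with n
        push_cast
        ring_nf
    linarith [hle, hsplit ▸ hle]

end helpers

theorem u1_face_asymptotics (a : ℝ) (ha : a ∈ Set.Ioc (0:ℝ) 1) :
    Tendsto
      (fun A : ℝ => A ^ (1 / a) * ∑' p : ℤ, Real.exp (-A * |(p : ℝ)| ^ a))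
      (nhdsWithin 0 (Set.Ioi 0))
      (nhds (2 * Real.Gamma (1 / a) / a)) := by
  obtain ⟨ha0, _⟩ := ha
  set I : ℝ := ∫ x in Ioi (0:ℝ), Real.exp (-x ^ a) with hI
  have hIval : 2 * Real.Gamma (1 / a) / a = 2 * I := by
    rw [hI, integral_exp_neg_rpow ha0, Real.Gamma_add_one (one_div_ne_zero ha0.ne')]
    field_simp
  rw [hIval]
  have hbound : ∀ A ∈ Ioi (0:ℝ),
      2*I - A^(1/a) ≤ A ^ (1 / a) * ∑' p : ℤ, Real.exp (-A * |(p : ℝ)| ^ a) ∧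
      A ^ (1 / a) * ∑' p : ℤ, Real.exp (-A * |(p : ℝ)| ^ a) ≤ 2*I + A^(1/a) := by
    intro A hA
    have hA0 : (0:ℝ) < A := hA
    set t : ℝ := A ^ (1/a) with htdef
    have ht : 0 < t := Real.rpow_pos_of_pos hA0 _
    have hta : t ^ a = A := by
      rw [htdef, ← Real.rpow_mul hA0.le, one_div_mul_cancel ha0.ne', Real.rpow_one]
    have hrw : ∀ p : ℤ, Real.exp (-A * |(p:ℝ)| ^ a) = Real.exp (-(t * |(p:ℝ)|) ^ a) := by
      intro p
      rw [Real.mul_rpow ht.le (abs_nonneg _), hta]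
      ring_nf
    obtain ⟨hsum, hup, hlow⟩ := key_bounds ha0 ht
    set S : ℝ := ∑' n : ℕ, Real.exp (-(t * ((n:ℝ)+1)) ^ a) with hS
    set G : ℤ → ℝ := fun p => Real.exp (-(t * |(p:ℝ)|) ^ a) with hG
    have he1 : (fun n : ℕ => G ((n:ℤ)+1)) = fun n : ℕ => Real.exp (-(t * ((n:ℝ)+1)) ^ a) := by
      funext n
      simp only [hG]
      congr 3
      push_cast
      rw [abs_of_nonneg (by positivity)]
    have he2 : (fun n : ℕ => G (-((n:ℤ)+1))) = fun n : ℕ => Real.exp (-(t * ((n:ℝ)+1)) ^ a) := by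
      funext n
      simp only [hG]
      congr 3
      push_cast
      rw [abs_neg, abs_of_nonneg (by positivity)]
    have hG0 : G 0 = 1 := by
      simp only [hG, Int.cast_zero, abs_zero, mul_zero]
      rw [Real.zero_rpow ha0.ne', neg_zero, Real.exp_zero]
    have htsumG : ∑' p : ℤ, G p = S + 1 + S := by
      rw [tsum_of_add_one_of_neg_add_one (he1 ▸ hsum) (he2 ▸ hsum), he1, he2, hG0, ← hS]
    have hmain : A ^ (1 / a) * ∑' p : ℤ, Real.exp (-A * |(p : ℝ)| ^ a) = t * (S + 1 + S) := by
      rw [← htsumG, ← htdef]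
      congr 1
      exact tsum_congr fun p => hrw p
    rw [hmain]
    constructor
    · nlinarith [hlow, ht.le]
    · nlinarith [hup, ht.le]
  have h0 : Tendsto (fun A : ℝ => A ^ (1/a)) (nhdsWithin 0 (Ioi 0)) (nhds 0) := by
    have hc := (Real.continuousAt_rpow_const 0 (1/a) (Or.inr (by positivity))).tendsto
    rw [Real.zero_rpow (one_div_ne_zero ha0.ne')] at hc
    exact hc.mono_left nhdsWithin_le_nhds
  have hlo : Tendsto (fun A : ℝ => 2*I - A^(1/a)) (nhdsWithin 0 (Ioi 0)) (nhds (2*I)) := by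
    simpa using tendsto_const_nhds.sub h0
  have hhi : Tendsto (fun A : ℝ => 2*I + A^(1/a)) (nhdsWithin 0 (Ioi 0)) (nhds (2*I)) := by
    simpa using tendsto_const_nhds.add h0
  refine tendsto_of_tendsto_of_tendsto_of_le_of_le' hlo hhi ?_ ?_
  · exact eventually_mem_nhdsWithin.mono fun A hA => (hbound A hA).1
  · exact eventually_mem_nhdsWithin.mono fun A hA => (hbound A hA).2
end

section
/- Let a ∈ (0,1]. Then lim_{A → 0+} A^{3/a} · ∑_{j ∈ (1/2)ℕ} (2j+1)^2 · exp(−A·j^a) = 8·Γ(3/a) / a, where the sum ranges over all half-integers j = q/2 with q ∈ ℕ (including j = 0). -/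
open Filter Real Set MeasureTheory Topology

lemma my_rpow_add_le {p x y : ℝ} (hp : 0 ≤ p) (hp1 : p ≤ 1) (hx : 0 ≤ x) (hy : 0 ≤ y) :
    (x + y) ^ p ≤ x ^ p + y ^ p := by
  have h := NNReal.rpow_add_le_add_rpow x.toNNReal y.toNNReal hp hp1
  have h' := NNReal.coe_le_coe.mpr h
  push_cast at h'
  rwa [Real.coe_toNNReal _ hx, Real.coe_toNNReal _ hy] at h'

lemma my_int_rpow {a b : ℝ} (ha : 0 < a) (hb : 0 < b) {q : ℝ} (hq : -1 < q) :
    IntegrableOn (fun s : ℝ => s ^ q * Real.exp (-(b * s ^ a))) (Ioi 0) := by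
  rw [← integrableOn_Ioi_comp_rpow_iff' _ (one_div_ne_zero ha.ne')]
  have hcongr : EqOn
      (fun x : ℝ => x ^ ((1:ℝ)/a - 1) • ((x ^ ((1:ℝ)/a)) ^ q * Real.exp (-(b * (x ^ ((1:ℝ)/a)) ^ a))))
      (fun x : ℝ => x ^ ((q + 1)/a - 1) * Real.exp (-(b * x))) (Ioi 0) := by
    intro x hx
    have hx0 : (0:ℝ) < x := hx
    simp only [smul_eq_mul]
    rw [← Real.rpow_mul hx0.le, ← Real.rpow_mul hx0.le, one_div, inv_mul_cancel₀ ha.ne',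
      Real.rpow_one, ← mul_assoc, ← Real.rpow_add hx0]
    congr 2
    field_simp
    ring
  rw [integrableOn_congr_fun hcongr measurableSet_Ioi]
  have hbase := integrableOn_rpow_mul_exp_neg_mul_rpow (p := 1) (b := b)
    (s := (q+1)/a - 1) (by have : 0 < (q+1)/a := div_pos (by linarith) ha; linarith) zero_lt_one hb
  apply hbase.congr_fun ?_ measurableSet_Ioi
  intro x hx
  simp only [Real.rpow_one, neg_mul]

lemma my_int_bound {a b : ℝ} (ha : 0 < a) (hb : 0 < b) :
    IntegrableOn (fun s : ℝ => (s + 1) ^ 2 * Real.exp (-(b * s ^ a))) (Ioi 0) := by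
  have h2 := my_int_rpow ha hb (q := 2) (by norm_num)
  have h1 := my_int_rpow ha hb (q := 1) (by norm_num)
  have h0 := my_int_rpow ha hb (q := 0) (by norm_num)
  have hsum := (h2.add (h1.const_mul 2)).add h0
  apply hsum.congr
  refine Eventually.of_forall fun s => ?_
  simp only [Pi.add_apply]
  rw [show ((2:ℝ) = ((2:ℕ):ℝ)) by norm_num, Real.rpow_natCast, Real.rpow_one, Real.rpow_zero]
  ring

lemma my_summable {a c : ℝ} (ha : 0 < a) (hc : 0 < c) :
    Summable (fun q : ℕ => ((q:ℝ) + 1) ^ 2 * Real.exp (-(c * (q:ℝ) ^ a))) := by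
  apply summable_of_isBigO_nat (g := fun n : ℕ => (n:ℝ) ^ (-2:ℝ))
    (Real.summable_nat_rpow.mpr (by norm_num))
  rw [Asymptotics.isBigO_iff]
  refine ⟨1, ?_⟩
  -- key real tendsto
  have key : Tendsto (fun y : ℝ => y ^ ((4:ℝ)/a) * Real.exp (-c * y)) atTop (𝓝 0) :=
    tendsto_rpow_mul_exp_neg_mul_atTop_nhds_zero _ c hc
  have comp : Tendsto (fun x : ℝ => (x ^ a) ^ ((4:ℝ)/a) * Real.exp (-c * x ^ a)) atTop (𝓝 0) :=
    key.comp (tendsto_rpow_atTop ha)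
  have comp' : Tendsto (fun x : ℝ => x ^ (4:ℝ) * Real.exp (-c * x ^ a)) atTop (𝓝 0) := by
    apply comp.congr'
    filter_upwards [eventually_gt_atTop 0] with x hx
    rw [← Real.rpow_mul hx.le]
    congr 2
    field_simp
  have hsmall : ∀ᶠ x : ℝ in atTop, x ^ (4:ℝ) * Real.exp (-c * x ^ a) ≤ 1/4 := by
    have := comp'.eventually (eventually_le_nhds (show (0:ℝ) < 1/4 by norm_num))
    exact this
  have hnat : ∀ᶠ n : ℕ in atTop, ((n:ℝ)) ^ (4:ℝ) * Real.exp (-c * (n:ℝ) ^ a) ≤ 1/4 :=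
    tendsto_natCast_atTop_atTop.eventually hsmall
  filter_upwards [hnat, eventually_ge_atTop 1] with n hn hn1
  have hn0 : (0:ℝ) < n := by exact_mod_cast hn1
  have hfn : (0:ℝ) ≤ ((n:ℝ) + 1) ^ 2 * Real.exp (-(c * (n:ℝ) ^ a)) := by positivity
  rw [Real.norm_eq_abs, Real.norm_eq_abs, abs_of_nonneg hfn,
    abs_of_nonneg (Real.rpow_nonneg hn0.le _), one_mul]
  -- f n ≤ n^(-2)  ⟺  f n * n^2 ≤ 1
  rw [Real.rpow_neg hn0.le, show ((2:ℝ) = ((2:ℕ):ℝ)) by norm_num, Real.rpow_natCast,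
    inv_eq_one_div, le_div_iff₀ (by positivity)]
  have hn' : ((n:ℝ)) ^ 4 * Real.exp (-(c * (n:ℝ) ^ a)) ≤ 1/4 := by
    rw [show ((4:ℝ) = ((4:ℕ):ℝ)) by norm_num, Real.rpow_natCast, neg_mul] at hn
    exact hn
  have h1 : ((n:ℝ) + 1) ^ 2 ≤ (2 * n) ^ 2 := by
    have h1n : (1:ℝ) ≤ n := by exact_mod_cast hn1
    have : (n:ℝ) + 1 ≤ 2 * n := by linarith
    exact pow_le_pow_left₀ (by positivity) this 2
  have hEn : (0:ℝ) ≤ Real.exp (-(c * (n:ℝ) ^ a)) * (n:ℝ) ^ 2 := by positivity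
  have step1 := mul_le_mul_of_nonneg_right h1 hEn
  nlinarith [step1, hn']

lemma my_Ici_union : Ici (0:ℝ) = ⋃ n : ℕ, Ico (n:ℝ) ((n:ℝ) + 1) := by
  ext x
  simp only [mem_Ici, mem_iUnion, mem_Ico]
  constructor
  · intro hx
    exact ⟨⌊x⌋₊, Nat.floor_le hx, Nat.lt_floor_add_one x⟩
  · rintro ⟨n, hn, -⟩
    exact le_trans (by positivity) hn

lemma my_tsum_eq_integral (f : ℕ → ℝ) (h0 : ∀ q, 0 ≤ f q) (hs : Summable f) :
    ∫ x in Ioi (0:ℝ), f ⌊x⌋₊ = ∑' q, f q := by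
  have hm : Measurable fun x : ℝ => f ⌊x⌋₊ := measurable_from_nat.comp Nat.measurable_floor
  rw [MeasureTheory.integral_eq_lintegral_of_nonneg_ae
    (Eventually.of_forall fun x => h0 _) (hm.aestronglyMeasurable)]
  have hres : (volume : Measure ℝ).restrict (Ioi 0) = volume.restrict (Ici 0) :=
    Measure.restrict_congr_set Ioi_ae_eq_Ici
  rw [hres, my_Ici_union, lintegral_iUnion (fun n => measurableSet_Ico) ?_disj]
  case _disj =>
    intro m n hmn
    simp only [Function.onFun]
    rw [Set.Ico_disjoint_Ico]
    rcases lt_or_gt_of_ne hmn with h | h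
    · have : (m:ℝ) + 1 ≤ n := by exact_mod_cast h
      calc min ((m:ℝ)+1) ((n:ℝ)+1) ≤ (m:ℝ) + 1 := min_le_left _ _
        _ ≤ (n:ℝ) := this
        _ ≤ max (m:ℝ) n := le_max_right _ _
    · have : (n:ℝ) + 1 ≤ m := by exact_mod_cast h
      calc min ((m:ℝ)+1) ((n:ℝ)+1) ≤ (n:ℝ) + 1 := min_le_right _ _
        _ ≤ (m:ℝ) := this
        _ ≤ max (m:ℝ) n := le_max_left _ _
  have heach : ∀ n : ℕ, ∫⁻ x in Ico (n:ℝ) ((n:ℝ)+1), ENNReal.ofReal (f ⌊x⌋₊)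
      = ENNReal.ofReal (f n) := by
    intro n
    rw [setLIntegral_congr_fun measurableSet_Ico
      (fun x hx => by rw [Nat.floor_eq_on_Ico n x hx]),
      setLIntegral_const, Real.volume_Ico]
    simp
  simp_rw [heach]
  rw [← ENNReal.ofReal_tsum_of_nonneg h0 hs, ENNReal.toReal_ofReal (tsum_nonneg h0)]

lemma my_floor_mul_tendsto (s : ℝ) (hs : 0 < s) :
    Tendsto (fun t : ℝ => t * (⌊s / t⌋₊ : ℝ)) (𝓝[>] 0) (𝓝 s) := by
  have hlo : Tendsto (fun t : ℝ => s - t) (𝓝[>] 0) (𝓝 s) := by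
    have : Tendsto (fun t : ℝ => s - t) (𝓝 0) (𝓝 (s - 0)) :=
      tendsto_const_nhds.sub tendsto_id
    simpa using this.mono_left nhdsWithin_le_nhds
  refine tendsto_of_tendsto_of_tendsto_of_le_of_le' hlo tendsto_const_nhds ?_ ?_
  · filter_upwards [self_mem_nhdsWithin] with t ht
    have ht0 : (0:ℝ) < t := ht
    have h1 : s / t - 1 < (⌊s / t⌋₊ : ℝ) := Nat.sub_one_lt_floor _
    have := (mul_lt_mul_iff_right₀ ht0).mpr h1
    rw [mul_sub, mul_one, mul_div_cancel₀ _ ht0.ne'] at this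
    linarith
  · filter_upwards [self_mem_nhdsWithin] with t ht
    have ht0 : (0:ℝ) < t := ht
    have h1 : (⌊s / t⌋₊ : ℝ) ≤ s / t := Nat.floor_le (by positivity)
    calc t * (⌊s / t⌋₊ : ℝ) ≤ t * (s / t) := by
          exact mul_le_mul_of_nonneg_left h1 ht0.le
      _ = s := by field_simp

lemma my_floor_succ_mul_tendsto (s : ℝ) (hs : 0 < s) :
    Tendsto (fun t : ℝ => t * ((⌊s / t⌋₊ : ℝ) + 1)) (𝓝[>] 0) (𝓝 s) := by
  have hhi : Tendsto (fun t : ℝ => s + t) (𝓝[>] 0) (𝓝 s) := by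
    have : Tendsto (fun t : ℝ => s + t) (𝓝 0) (𝓝 (s + 0)) :=
      tendsto_const_nhds.add tendsto_id
    simpa using this.mono_left nhdsWithin_le_nhds
  refine tendsto_of_tendsto_of_tendsto_of_le_of_le' tendsto_const_nhds hhi ?_ ?_
  · filter_upwards [self_mem_nhdsWithin] with t ht
    have ht0 : (0:ℝ) < t := ht
    have h1 : s / t < (⌊s / t⌋₊ : ℝ) + 1 := Nat.lt_floor_add_one _
    have := (mul_lt_mul_iff_right₀ ht0).mpr h1
    rw [mul_div_cancel₀ _ ht0.ne'] at this
    linarith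
  · filter_upwards [self_mem_nhdsWithin] with t ht
    have ht0 : (0:ℝ) < t := ht
    have h1 : (⌊s / t⌋₊ : ℝ) ≤ s / t := Nat.floor_le (by positivity)
    have h2 : t * (⌊s / t⌋₊ : ℝ) ≤ s := by
      have := mul_le_mul_of_nonneg_left h1 ht0.le
      rwa [mul_div_cancel₀ _ ht0.ne'] at this
    rw [mul_add, mul_one]
    linarith

lemma my_pointwise (a : ℝ) (ha : 0 < a) (s : ℝ) (hs : 0 < s) :
    Tendsto (fun t : ℝ =>
        (t * ((⌊s / t⌋₊ : ℝ) + 1)) ^ 2 * Real.exp (-((t * (⌊s / t⌋₊ : ℝ) / 2) ^ a)))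
      (𝓝[>] 0) (𝓝 (s ^ 2 * Real.exp (-((s / 2) ^ a)))) := by
  have h1 : Tendsto (fun t : ℝ => (t * ((⌊s / t⌋₊ : ℝ) + 1)) ^ 2) (𝓝[>] 0) (𝓝 (s ^ 2)) :=
    (my_floor_succ_mul_tendsto s hs).pow 2
  have hcont : ContinuousAt (fun x : ℝ => Real.exp (-((x / 2) ^ a))) s := by
    have hc1 : ContinuousAt (fun x : ℝ => (x / 2) ^ a) s := by
      have : ContinuousAt (fun y : ℝ => y ^ a) (s / 2) :=
        Real.continuousAt_rpow_const _ _ (Or.inl (by positivity))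
      have hc2 : ContinuousAt (fun x : ℝ => x / 2) s := (continuous_id.div_const 2).continuousAt
      exact ContinuousAt.comp (g := fun y : ℝ => y ^ a) this hc2
    exact Real.continuous_exp.continuousAt.comp hc1.neg
  have h2 : Tendsto (fun t : ℝ => Real.exp (-((t * (⌊s / t⌋₊ : ℝ) / 2) ^ a)))
      (𝓝[>] 0) (𝓝 (Real.exp (-((s / 2) ^ a)))) :=
    hcont.tendsto.comp (my_floor_mul_tendsto s hs)
  exact h1.mul h2

lemma my_integral_value {a : ℝ} (ha : 0 < a) :
    ∫ s in Ioi (0:ℝ), s ^ 2 * Real.exp (-((s / 2) ^ a)) = 8 * Real.Gamma (3 / a) / a := by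
  have hb : (0:ℝ) < (2:ℝ) ^ (-a) := Real.rpow_pos_of_pos two_pos _
  have hcongr : EqOn (fun s : ℝ => s ^ 2 * Real.exp (-((s / 2) ^ a)))
      (fun s : ℝ => s ^ (2:ℝ) * Real.exp (-(2:ℝ) ^ (-a) * s ^ a)) (Ioi 0) := by
    intro s hs
    have hs0 : (0:ℝ) < s := hs
    simp only
    rw [Real.div_rpow hs0.le two_pos.le, div_eq_mul_inv, ← Real.rpow_neg two_pos.le,
      show ((2:ℝ) = ((2:ℕ):ℝ)) by norm_num, Real.rpow_natCast]
    ring_nf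
  rw [setIntegral_congr_fun measurableSet_Ioi hcongr,
    integral_rpow_mul_exp_neg_mul_rpow ha (by norm_num) hb,
    ← Real.rpow_mul two_pos.le]
  have hexp : -a * (-(2 + 1) / a) = 3 := by field_simp; ring
  rw [hexp, show ((3:ℝ) = ((3:ℕ):ℝ)) by norm_num, Real.rpow_natCast]
  norm_num
  ring

lemma my_key (a : ℝ) (ha : 0 < a) (ha1 : a ≤ 1) :
    Tendsto (fun t : ℝ => ∫ s in Ioi (0:ℝ),
        (t * ((⌊s / t⌋₊ : ℝ) + 1)) ^ 2 * Real.exp (-((t * (⌊s / t⌋₊ : ℝ) / 2) ^ a)))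
      (𝓝[>] 0) (𝓝 (8 * Real.Gamma (3 / a) / a)) := by
  rw [← my_integral_value ha]
  have hb : (0:ℝ) < (2:ℝ) ^ (-a) := Real.rpow_pos_of_pos two_pos _
  have hhalf : ∀ s : ℝ, 0 < s → (s / 2) ^ a = (2:ℝ) ^ (-a) * s ^ a := by
    intro s hs
    rw [Real.div_rpow hs.le two_pos.le, div_eq_mul_inv, ← Real.rpow_neg two_pos.le, mul_comm]
  apply tendsto_integral_filter_of_dominated_convergence
    (bound := fun s : ℝ => Real.exp 1 * ((s + 1) ^ 2 * Real.exp (-((2:ℝ) ^ (-a) * s ^ a))))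
  · filter_upwards [self_mem_nhdsWithin] with t ht
    have hm : Measurable fun s : ℝ => (⌊s / t⌋₊ : ℕ) :=
      Nat.measurable_floor.comp (measurable_id.div_const t)
    exact ((measurable_from_nat
      (f := fun n : ℕ => (t * ((n:ℝ) + 1)) ^ 2 * Real.exp (-((t * (n:ℝ) / 2) ^ a)))).comp
        hm).aestronglyMeasurable
  · filter_upwards [Ioo_mem_nhdsGT_of_mem (show (0:ℝ) ∈ Ico (0:ℝ) 1 by norm_num)] with t ht
    rw [ae_restrict_iff' measurableSet_Ioi]
    refine Eventually.of_forall fun s hs => ?_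
    obtain ⟨ht0, ht1⟩ := ht
    have hs0 : (0:ℝ) < s := hs
    set n : ℝ := (⌊s / t⌋₊ : ℝ) with hn
    have hn0 : (0:ℝ) ≤ n := Nat.cast_nonneg _
    have htn_le : t * n ≤ s := by
      have h1 : n ≤ s / t := Nat.floor_le (by positivity)
      have := mul_le_mul_of_nonneg_left h1 ht0.le
      rwa [mul_div_cancel₀ _ ht0.ne'] at this
    have hs_lt : s < t * n + t := by
      have h1 : s / t < n + 1 := Nat.lt_floor_add_one _
      have := (mul_lt_mul_iff_right₀ ht0).mpr h1
      rw [mul_div_cancel₀ _ ht0.ne', mul_add, mul_one] at this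
      exact this
    have hA : (t * (n + 1)) ^ 2 ≤ (s + 1) ^ 2 := by
      apply pow_le_pow_left₀ (by positivity)
      rw [mul_add, mul_one]
      linarith
    have hExpArg : (s / 2) ^ a ≤ (t * n / 2) ^ a + 1 := by
      have h1 : (s / 2) ^ a ≤ ((t * n + 1) / 2) ^ a :=
        Real.rpow_le_rpow (by positivity) (by linarith) ha.le
      have h2 : ((t * n + 1) / 2) ^ a ≤ (t * n / 2) ^ a + ((1:ℝ) / 2) ^ a := by
        have := my_rpow_add_le ha.le ha1 (show (0:ℝ) ≤ t * n / 2 by positivity)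
          (show (0:ℝ) ≤ (1:ℝ)/2 by norm_num)
        calc ((t * n + 1) / 2) ^ a = (t * n / 2 + 1 / 2) ^ a := by ring_nf
          _ ≤ (t * n / 2) ^ a + ((1:ℝ) / 2) ^ a := this
      have h3 : ((1:ℝ) / 2) ^ a ≤ 1 :=
        Real.rpow_le_one (by norm_num) (by norm_num) ha.le
      linarith
    have hExp : Real.exp (-((t * n / 2) ^ a)) ≤ Real.exp 1 * Real.exp (-((s / 2) ^ a)) := by
      rw [← Real.exp_add]
      exact Real.exp_le_exp.mpr (by linarith)
    have hnorm : ‖(t * (n + 1)) ^ 2 * Real.exp (-((t * n / 2) ^ a))‖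
        = (t * (n + 1)) ^ 2 * Real.exp (-((t * n / 2) ^ a)) :=
      Real.norm_of_nonneg (by positivity)
    rw [hnorm, ← hhalf s hs0]
    calc (t * (n + 1)) ^ 2 * Real.exp (-((t * n / 2) ^ a))
        ≤ (s + 1) ^ 2 * (Real.exp 1 * Real.exp (-((s / 2) ^ a))) :=
          mul_le_mul hA hExp (Real.exp_pos _).le (by positivity)
      _ = Real.exp 1 * ((s + 1) ^ 2 * Real.exp (-((s / 2) ^ a))) := by ring
  · exact ((my_int_bound ha hb).const_mul (Real.exp 1))
  · rw [ae_restrict_iff' measurableSet_Ioi]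
    exact Eventually.of_forall fun s hs => my_pointwise a ha s hs

lemma my_half {a : ℝ} (ha : 0 < a) {x : ℝ} (hx : 0 ≤ x) :
    (x / 2) ^ a = (2:ℝ) ^ (-a) * x ^ a := by
  rcases hx.eq_or_lt with h | h
  · rw [← h]
    simp [Real.zero_rpow ha.ne']
  · rw [Real.div_rpow h.le two_pos.le, div_eq_mul_inv, ← Real.rpow_neg two_pos.le, mul_comm]

theorem su2_face_asymptotics (a : ℝ) (ha : a ∈ Set.Ioc (0:ℝ) 1) :
    Tendsto
      (fun A : ℝ =>
        A ^ (3 / a) *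
          ∑' q : ℕ, (2 * ((q : ℝ) / 2) + 1) ^ 2 * Real.exp (-A * ((q : ℝ) / 2) ^ a))
      (nhdsWithin 0 (Set.Ioi 0))
      (nhds (8 * Real.Gamma (3 / a) / a)) := by
  obtain ⟨ha0, ha1⟩ := ha
  have hφ : Tendsto (fun A : ℝ => A ^ ((1:ℝ)/a)) (𝓝[>] 0) (𝓝[>] 0) := by
    rw [tendsto_nhdsWithin_iff]
    constructor
    · have hc : ContinuousAt (fun x : ℝ => x ^ ((1:ℝ)/a)) 0 :=
        Real.continuousAt_rpow_const 0 ((1:ℝ)/a) (Or.inr (by positivity))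
      have h2 := hc.tendsto.mono_left (nhdsWithin_le_nhds (s := Set.Ioi (0:ℝ)))
      rwa [Real.zero_rpow (by positivity : (1:ℝ)/a ≠ 0)] at h2
    · filter_upwards [self_mem_nhdsWithin] with A hA
      exact Real.rpow_pos_of_pos hA _
  have hmain := (my_key a ha0 ha1).comp hφ
  apply hmain.congr'
  filter_upwards [self_mem_nhdsWithin] with A hA
  have hA0 : (0:ℝ) < A := hA
  set t : ℝ := A ^ ((1:ℝ)/a) with ht_def
  have ht : 0 < t := Real.rpow_pos_of_pos hA0 _
  have hta : t ^ a = A := by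
    rw [ht_def, ← Real.rpow_mul hA0.le, one_div, inv_mul_cancel₀ ha0.ne', Real.rpow_one]
  set c : ℝ := A * (2:ℝ) ^ (-a) with hc_def
  have hc : 0 < c := mul_pos hA0 (Real.rpow_pos_of_pos two_pos _)
  set f : ℕ → ℝ := fun q => ((q:ℝ) + 1) ^ 2 * Real.exp (-(c * (q:ℝ) ^ a)) with hf_def
  have hf0 : ∀ q, 0 ≤ f q := fun q => by positivity
  have hsum_eq : ∑' q : ℕ, (2 * ((q : ℝ) / 2) + 1) ^ 2 * Real.exp (-A * ((q : ℝ) / 2) ^ a)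
      = ∑' q, f q := by
    apply tsum_congr
    intro q
    rw [show (2 * ((q : ℝ) / 2) + 1) = (q:ℝ) + 1 by ring,
      my_half ha0 (by positivity : (0:ℝ) ≤ (q:ℝ))]
    congr 1
    rw [hc_def]
    ring_nf
  have ht3 : t ^ (3:ℕ) = A ^ ((3:ℝ)/a) := by
    rw [ht_def, ← Real.rpow_natCast (A ^ ((1:ℝ)/a)) 3, ← Real.rpow_mul hA0.le]
    congr 1
    push_cast
    ring
  show (∫ s in Ioi (0:ℝ),
      (t * ((⌊s / t⌋₊ : ℝ) + 1)) ^ 2 * Real.exp (-((t * (⌊s / t⌋₊ : ℝ) / 2) ^ a)))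
      = A ^ (3/a) * ∑' q : ℕ, (2 * ((q : ℝ) / 2) + 1) ^ 2 * Real.exp (-A * ((q : ℝ) / 2) ^ a)
  rw [hsum_eq]
  have hGf : ∀ s ∈ Ioi (0:ℝ),
      (t * ((⌊s / t⌋₊ : ℝ) + 1)) ^ 2 * Real.exp (-((t * (⌊s / t⌋₊ : ℝ) / 2) ^ a))
        = t ^ 2 * f ⌊t⁻¹ * s⌋₊ := by
    intro s hs
    rw [show s / t = t⁻¹ * s by ring]
    set n : ℝ := (⌊t⁻¹ * s⌋₊ : ℝ)
    have hn0 : (0:ℝ) ≤ n := Nat.cast_nonneg _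
    have harg : (t * n / 2) ^ a = c * n ^ a := by
      rw [my_half ha0 (by positivity), Real.mul_rpow ht.le hn0, hta, hc_def]
      ring
    rw [harg, hf_def]
    ring
  rw [setIntegral_congr_fun measurableSet_Ioi hGf, integral_const_mul,
    integral_comp_mul_left_Ioi (fun x => f ⌊x⌋₊) 0 (inv_pos.mpr ht), inv_inv, mul_zero,
    smul_eq_mul, my_tsum_eq_integral f hf0 (my_summable ha0 hc), ← ht3]
  ring
end

section
/- Let S1 and S12 be real numbers. Define Γ(λ) = −λ + 6λ^2·(3S1 + 2S12) and Z(λ) = 1 − λ·(3S1 + S12). Then lim_{λ → 0} λ^{−2} · ( −Γ(λ)/Z(λ)^3 − λ ) = −9·(S1 + S12). -/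
open Filter

theorem phi6_matrix_two_loop_beta (S1 S12 : ℝ) :
    Tendsto
      (fun lam : ℝ =>
        lam⁻¹ ^ 2 *
          (-(-lam + 6 * lam ^ 2 * (3 * S1 + 2 * S12)) /
              (1 - lam * (3 * S1 + S12)) ^ 3 - lam))
      (nhdsWithin 0 {0}ᶜ)
      (nhds (-9 * (S1 + S12))) := by
  set A := 3 * S1 + 2 * S12
  set B := 3 * S1 + S12
  have hg : Tendsto
      (fun lam : ℝ => (3 * B - 6 * A - 3 * lam * B ^ 2 + lam ^ 2 * B ^ 3) /
        (1 - lam * B) ^ 3) (nhdsWithin 0 {0}ᶜ) (nhds (-9 * (S1 + S12))) := by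
    have hc : ContinuousAt
        (fun lam : ℝ => (3 * B - 6 * A - 3 * lam * B ^ 2 + lam ^ 2 * B ^ 3) /
          (1 - lam * B) ^ 3) 0 := by
      apply ContinuousAt.div
      · fun_prop
      · fun_prop
      · norm_num
    have := hc.continuousWithinAt (s := {0}ᶜ)
    have hval : (3 * B - 6 * A - 3 * (0:ℝ) * B ^ 2 + (0:ℝ) ^ 2 * B ^ 3) /
        (1 - (0:ℝ) * B) ^ 3 = -9 * (S1 + S12) := by
      simp [A, B]; ring
    rw [show (-9 * (S1 + S12)) = 3 * B - 6 * A by simp [A, B]; ring]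
    simpa [ContinuousWithinAt] using this
  apply hg.congr'
  have hopen : {lam : ℝ | (1 - lam * B) ^ 3 ≠ 0} ∈ nhds (0:ℝ) := by
    have : ContinuousOn (fun lam : ℝ => (1 - lam * B) ^ 3) Set.univ := by fun_prop
    have hc : Continuous (fun lam : ℝ => (1 - lam * B) ^ 3) := by fun_prop
    have := hc.isOpen_preimage {0}ᶜ isOpen_compl_singleton
    exact this.mem_nhds (by norm_num)
  filter_upwards [nhdsWithin_le_nhds hopen, self_mem_nhdsWithin] with lam hd h0
  have hlam : lam ≠ 0 := h0
  have hden : (1 - lam * B) ≠ 0 := by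
    intro h; exact hd (by simp [h])
  field_simp [show 1 - B * lam ≠ 0 by rwa [mul_comm]]
  ring
end

section
/- Let S, A, C1, C2 be real numbers. Define Z(λ) = 1 − 2λS + 2λ^2·(2A + 3S^2) + 4λ^2·(2C1 + C2) and Γ(λ) = −λ + 6λ^2·S − λ^3·(20A + 30S^2 + 24C1 + 12C2). Then lim_{λ → 0} λ^{−3} · ( −Γ(λ)/Z(λ)^3 − λ ) = 8A. -/
open Filter

theorem phi6_tensor_four_loop_beta (S A C1 C2 : ℝ) :
    Tendsto
      (fun lam : ℝ =>
        lam⁻¹ ^ 3 *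
          (-(-lam + 6 * lam ^ 2 * S -
                lam ^ 3 * (20 * A + 30 * S ^ 2 + 24 * C1 + 12 * C2)) /
              (1 - 2 * lam * S + 2 * lam ^ 2 * (2 * A + 3 * S ^ 2) +
                  4 * lam ^ 2 * (2 * C1 + C2)) ^ 3 - lam))
      (nhdsWithin 0 {0}ᶜ)
      (nhds (8 * A)) := by
  set M : ℝ := 4 * A + 6 * S ^ 2 + 8 * C1 + 4 * C2 with hM
  set Z : ℝ → ℝ := fun lam =>
    1 - 2 * lam * S + 2 * lam ^ 2 * (2 * A + 3 * S ^ 2) +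
      4 * lam ^ 2 * (2 * C1 + C2) with hZ
  set P : ℝ → ℝ := fun lam =>
    8 * A + lam * (12 * S * M + 8 * S ^ 3) - lam ^ 2 * (3 * M ^ 2 + 12 * S ^ 2 * M)
      + 6 * lam ^ 3 * S * M ^ 2 - lam ^ 4 * M ^ 3 with hP
  have hZcont : Continuous Z := by fun_prop
  have hZ0 : Z 0 = 1 := by simp [hZ]
  have hZne : ∀ᶠ lam in nhdsWithin (0 : ℝ) {0}ᶜ, Z lam ≠ 0 := by
    apply Filter.Eventually.filter_mono nhdsWithin_le_nhds
    have : Tendsto Z (nhds 0) (nhds 1) :=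
      hZ0 ▸ (hZcont.continuousAt : Tendsto Z (nhds 0) (nhds (Z 0)))
    exact this.eventually_ne one_ne_zero
  have hne0 : ∀ᶠ lam in nhdsWithin (0 : ℝ) {0}ᶜ, lam ≠ 0 :=
    eventually_mem_nhdsWithin.mono (fun x hx => hx)
  have heq : ∀ᶠ lam in nhdsWithin (0 : ℝ) {0}ᶜ,
      P lam / (Z lam) ^ 3 =
        lam⁻¹ ^ 3 *
          (-(-lam + 6 * lam ^ 2 * S -
                lam ^ 3 * (20 * A + 30 * S ^ 2 + 24 * C1 + 12 * C2)) /
              (1 - 2 * lam * S + 2 * lam ^ 2 * (2 * A + 3 * S ^ 2) +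
                  4 * lam ^ 2 * (2 * C1 + C2)) ^ 3 - lam) := by
    filter_upwards [hZne, hne0] with lam hZn hl
    have hZn' : (1 - 2 * lam * S + 2 * lam ^ 2 * (2 * A + 3 * S ^ 2) +
        4 * lam ^ 2 * (2 * C1 + C2)) ≠ 0 := hZn
    simp only [hP, hZ, hM]
    generalize hz : (1 - 2 * lam * S + 2 * lam ^ 2 * (2 * A + 3 * S ^ 2) +
        4 * lam ^ 2 * (2 * C1 + C2)) = z at hZn' ⊢
    field_simp
    subst hz
    ring
  have hlim : Tendsto (fun lam => P lam / (Z lam) ^ 3)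
      (nhdsWithin (0 : ℝ) {0}ᶜ) (nhds (8 * A)) := by
    have hPcont : Continuous P := by fun_prop
    have h : ContinuousAt (fun lam => P lam / (Z lam) ^ 3) 0 :=
      ContinuousAt.div (hPcont.continuousAt) ((hZcont.pow 3).continuousAt)
        (by simp [hZ0])
    have := h.tendsto
    simp only [hZ0, hP] at this
    norm_num at this
    exact this.mono_left nhdsWithin_le_nhds
  exact hlim.congr' heq
end
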